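/- Let (T, 𝒜, μ) be a finite measure space with 0 < μ(T) < ∞, let T₀ ∈ 𝒜 with μ(T₀) > 0, and let f̃ : T₀ → ℝ be measurable with f̃ > 0 and ∫_{T₀} (log f̃)^2 dμ < ∞. Define ι(f̃) : T → ℝ by ι(f̃)(t) = f̃(t) for t ∈ T₀ and ι(f̃)(t) = exp(S_{μ,T₀}(f̃)) for t ∈ T ∖ T₀. Then the embedding preserves the Bayes Hilbert space norm: ∫_T (log ι(f̃) − S_{μ,T}(ι(f̃)))^2 dμ = ∫_{T₀} (log f̃ − S_{μ,T₀}(f̃))^2 dμ. -/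

import Mathlib

open MeasureTheory

/-- Mean logarithmic integral of `f` over a measurable set `A`:
`S_{μ,A}(f) = (1/μ(A)) ∫_A log f dμ`. -/
noncomputable def Sm {T : Type*} [MeasurableSpace T] (μ : Measure T) (A : Set T)
    (f : T → ℝ) : ℝ :=
  (μ A).toReal⁻¹ * ∫ t in A, Real.log (f t) ∂μ

open scoped Classical in
/-- The canonical embedding of a density on `T₀` into the Bayes Hilbert space on `T`: it equals
`f` on `T₀` and the geometric mean `exp(S_{μ,T₀}(f))` off `T₀`. -/
noncomputable def iota {T : Type*} [MeasurableSpace T] (μ : Measure T) (T₀ : Set T)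
    (f : T → ℝ) (t : T) : ℝ :=
  if t ∈ T₀ then f t else Real.exp (Sm μ T₀ f)

/-- The embedding `ι : B²(T₀) ↪ B²(T)` preserves the Bayes Hilbert space norm:
`∫_T (log ι(f̃) − S_{μ,T}(ι(f̃)))² dμ = ∫_{T₀} (log f̃ − S_{μ,T₀}(f̃))² dμ`. -/
theorem iota_preserves_norm
    {T : Type*} [MeasurableSpace T] (μ : Measure T)
    (hμ0 : 0 < μ Set.univ) (hμfin : μ Set.univ < ⊤)
    (T₀ : Set T) (hT₀meas : MeasurableSet T₀) (hT₀pos : 0 < μ T₀)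
    (ft : T → ℝ) (hft : Measurable ft) (hftpos : ∀ t ∈ T₀, 0 < ft t)
    (hftsq : IntegrableOn (fun t => (Real.log (ft t)) ^ 2) T₀ μ) :
    ∫ t, (Real.log (iota μ T₀ ft t) - Sm μ Set.univ (iota μ T₀ ft)) ^ 2 ∂μ =
      ∫ t in T₀, (Real.log (ft t) - Sm μ T₀ ft) ^ 2 ∂μ := by
  classical
  haveI : IsFiniteMeasure μ := ⟨hμfin⟩
  set S : ℝ := Sm μ T₀ ft with hS
  -- log ∘ ft is integrable on T₀
  have hlogmeas : Measurable fun t => Real.log (ft t) := Real.measurable_log.comp hft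
  have hlog : IntegrableOn (fun t => Real.log (ft t)) T₀ μ := by
    refine Integrable.mono' (g := fun t => 1 + (Real.log (ft t)) ^ 2)
      ((integrable_const 1).add hftsq) hlogmeas.aestronglyMeasurable ?_
    filter_upwards with t
    have h := abs_nonneg (Real.log (ft t))
    rw [Real.norm_eq_abs]
    nlinarith [sq_abs (Real.log (ft t)), sq_nonneg (|Real.log (ft t)| - 1)]
  have hT₀ne : (μ T₀).toReal ≠ 0 := by
    refine (ENNReal.toReal_pos hT₀pos.ne' ?_).ne'
    exact ((measure_mono (Set.subset_univ _)).trans_lt hμfin).ne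
  have hunivne : (μ Set.univ).toReal ≠ 0 := (ENNReal.toReal_pos hμ0.ne' hμfin.ne).ne'
  have hIT₀ : ∫ t in T₀, Real.log (ft t) ∂μ = (μ T₀).toReal * S := by
    rw [hS, Sm]
    field_simp
  -- log ∘ iota equals log ft on T₀, S off T₀
  have hiota_on : ∀ t ∈ T₀, Real.log (iota μ T₀ ft t) = Real.log (ft t) := by
    intro t ht; simp [iota, ht]
  have hiota_off : ∀ t ∉ T₀, Real.log (iota μ T₀ ft t) = S := by
    intro t ht; simp [iota, ht, Real.log_exp, hS]
  -- integrability of log ∘ iota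
  have hlogiota_on : IntegrableOn (fun t => Real.log (iota μ T₀ ft t)) T₀ μ :=
    hlog.congr_fun (fun t ht => (hiota_on t ht).symm) hT₀meas
  have hlogiota_off : IntegrableOn (fun t => Real.log (iota μ T₀ ft t)) T₀ᶜ μ :=
    (integrableOn_const (measure_lt_top _ _).ne :
      IntegrableOn (fun _ => S) T₀ᶜ μ).congr_fun
      (fun t ht => (hiota_off t ht).symm) hT₀meas.compl
  have hlogiota : Integrable (fun t => Real.log (iota μ T₀ ft t)) μ := by
    rw [← integrableOn_univ, ← Set.union_compl_self T₀]
    exact hlogiota_on.union hlogiota_off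
  -- compute Sm over univ
  have hint_off : ∫ t in T₀ᶜ, Real.log (iota μ T₀ ft t) ∂μ = (μ T₀ᶜ).toReal * S := by
    rw [setIntegral_congr_fun hT₀meas.compl (fun t ht => hiota_off t ht)]
    simp [mul_comm, measureReal_def]
  have hint_on : ∫ t in T₀, Real.log (iota μ T₀ ft t) ∂μ = (μ T₀).toReal * S := by
    rw [setIntegral_congr_fun hT₀meas (fun t ht => hiota_on t ht)]
    exact hIT₀
  have hmeasadd : (μ T₀).toReal + (μ T₀ᶜ).toReal = (μ Set.univ).toReal := by
    rw [← ENNReal.toReal_add (measure_lt_top _ _).ne (measure_lt_top _ _).ne,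
      measure_add_measure_compl hT₀meas]
  have hSm : Sm μ Set.univ (iota μ T₀ ft) = S := by
    rw [Sm, ← Set.union_compl_self T₀,
      setIntegral_union (disjoint_compl_right) hT₀meas.compl hlogiota_on hlogiota_off,
      hint_on, hint_off, ← add_mul, hmeasadd, Set.union_compl_self,
      inv_mul_cancel_left₀ hunivne]
  rw [hSm]
  -- integrability of the squared integrand pieces
  have hsq_on : IntegrableOn (fun t => (Real.log (ft t) - S) ^ 2) T₀ μ := by
    have h2 : IntegrableOn
        (fun t => (Real.log (ft t)) ^ 2 - 2 * S * Real.log (ft t) + S ^ 2) T₀ μ :=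
      (hftsq.sub (hlog.const_mul (2 * S))).add (integrable_const _)
    exact h2.congr_fun (fun t _ => by ring) hT₀meas
  have hg_on : IntegrableOn (fun t => (Real.log (iota μ T₀ ft t) - S) ^ 2) T₀ μ :=
    hsq_on.congr_fun (fun t ht => by rw [hiota_on t ht]) hT₀meas
  have hg_off : IntegrableOn (fun t => (Real.log (iota μ T₀ ft t) - S) ^ 2) T₀ᶜ μ :=
    (integrableOn_const (measure_lt_top _ _).ne :
      IntegrableOn (fun _ => (0:ℝ)) T₀ᶜ μ).congr_fun
      (fun t ht => by rw [hiota_off t ht]; simp) hT₀meas.compl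
  have hg : Integrable (fun t => (Real.log (iota μ T₀ ft t) - S) ^ 2) μ := by
    rw [← integrableOn_univ, ← Set.union_compl_self T₀]
    exact hg_on.union hg_off
  rw [← setIntegral_univ (μ := μ), ← Set.union_compl_self T₀,
    setIntegral_union (disjoint_compl_right) hT₀meas.compl hg_on hg_off]
  have hzero : ∫ t in T₀ᶜ, (Real.log (iota μ T₀ ft t) - S) ^ 2 ∂μ = 0 := by
    rw [setIntegral_congr_fun hT₀meas.compl (g := fun _ => (0 : ℝ))
      (fun t ht => by rw [hiota_off t ht]; simp)]
    simp
  rw [hzero, add_zero,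
    setIntegral_congr_fun hT₀meas (fun t ht => by rw [hiota_on t ht])]
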